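/- For every ε > 0 and every β ∈ (0, α), (n/k_n)·P(W_1^β · W_{(1)}(n)/T(n) > ε) → 0 as n → ∞. -/

import Mathlib

open MeasureTheory Filter Finset Asymptotics ProbabilityTheory

noncomputable section

def RegVaryTail {Ω : Type} [MeasurableSpace Ω] (P : Measure Ω) (X : Ω → ℝ) (α : ℝ) : Prop :=
  ∀ x : ℝ, 0 < x →
    Tendsto (fun t => (P {ω | t * x < X ω}).toReal / (P {ω | t < X ω}).toReal)
      atTop (nhds (x ^ (-α)))

open Set
open scoped ENNReal NNReal

namespace Stmt5Aux

variable {Ω : Type} [MeasurableSpace Ω] (P : Measure Ω) [IsProbabilityMeasure P]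

set_option linter.unusedSectionVars false
set_option linter.unusedVariables false

lemma tail_pos {X : Ω → ℝ} {α : ℝ} (hreg : RegVaryTail P X α) (t : ℝ) :
    P {ω | t < X ω} ≠ 0 := by
  intro h0
  have hz : ∀ s : ℝ, t ≤ s → P {ω | s < X ω} = 0 := fun s hs =>
    measure_mono_null (fun ω (hω : s < X ω) => lt_of_le_of_lt hs hω) h0
  have h2 := hreg 2 (by norm_num)
  have hev : (fun s => (P {ω | s * 2 < X ω}).toReal / (P {ω | s < X ω}).toReal) =ᶠ[atTop]
      (fun _ => (0:ℝ)) := by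
    filter_upwards [eventually_ge_atTop t] with s hs
    rw [hz s hs]
    simp
  have h20 : ((2:ℝ) ^ (-α)) = 0 := by
    have : Tendsto (fun _ : ℝ => (0:ℝ)) atTop (nhds ((2:ℝ) ^ (-α))) := h2.congr' hev
    exact tendsto_nhds_unique this tendsto_const_nhds
  exact absurd h20 (ne_of_gt (Real.rpow_pos_of_pos (by norm_num) _))

lemma tail_bound {X : Ω → ℝ} {α α' : ℝ} (hα'0 : 0 < α') (hlt : α' < α)
    (hreg : RegVaryTail P X α) (hpos : ∀ t : ℝ, P {ω | t < X ω} ≠ 0) :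
    ∃ C : ℝ, 0 < C ∧ ∀ t : ℝ, 1 ≤ t → (P {ω | t < X ω}).toReal ≤ C * t ^ (-α') := by
  set f : ℝ → ℝ := fun t => (P {ω | t < X ω}).toReal with hf
  have hfpos : ∀ t, 0 < f t := fun t =>
    ENNReal.toReal_pos (hpos t) (measure_ne_top _ _)
  have hfle : ∀ t, f t ≤ 1 := fun t => by
    rw [hf]
    simpa using ENNReal.toReal_mono (by simp) (prob_le_one (μ := P) (s := {ω | t < X ω}))
  have hfmono : ∀ s t : ℝ, s ≤ t → f t ≤ f s := fun s t hst =>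
    ENNReal.toReal_mono (measure_ne_top _ _)
      (measure_mono fun ω (hω : t < X ω) => lt_of_le_of_lt hst hω)
  -- from regular variation at x = 2
  have h2 := hreg 2 (by norm_num)
  have hrl : (2:ℝ) ^ (-α) < 2 ^ (-α') := by
    apply Real.rpow_lt_rpow_of_exponent_lt (by norm_num)
    linarith
  obtain ⟨t₁, ht₁⟩ := (h2.eventually_lt_const hrl).exists_forall_of_atTop
  set t₀ : ℝ := max t₁ 1 with ht₀def
  have ht₀1 : (1:ℝ) ≤ t₀ := le_max_right _ _
  have ht₀0 : (0:ℝ) < t₀ := lt_of_lt_of_le one_pos ht₀1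
  have hstep : ∀ t : ℝ, t₀ ≤ t → f (2 * t) ≤ 2 ^ (-α') * f t := by
    intro t ht
    have h := ht₁ t (le_trans (le_max_left _ _) ht)
    have := (div_lt_iff₀ (hfpos t)).mp h
    calc f (2 * t) = f (t * 2) := by rw [mul_comm]
    _ ≤ 2 ^ (-α') * f t := le_of_lt this
  -- induction: f t ≤ (2 t₀)^{α'} t^{-α'} on [t₀, t₀ 2^{n+1}]
  have key : ∀ n : ℕ, ∀ t : ℝ, t₀ ≤ t → t ≤ t₀ * 2 ^ (n + 1) →
      f t ≤ (2 * t₀) ^ α' * t ^ (-α') := by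
    intro n
    induction n with
    | zero =>
      intro t ht h2t
      have htpos : 0 < t := lt_of_lt_of_le ht₀0 ht
      have h1 : t ^ α' ≤ (2 * t₀) ^ α' := by
        apply Real.rpow_le_rpow (le_of_lt htpos) _ (le_of_lt hα'0)
        rw [mul_comm]
        simpa using h2t
      have h2' : (1:ℝ) ≤ (2 * t₀) ^ α' * t ^ (-α') := by
        rw [Real.rpow_neg (le_of_lt htpos)]
        calc (1:ℝ) = t ^ α' * (t ^ α')⁻¹ := by
              rw [mul_inv_cancel₀ (ne_of_gt (Real.rpow_pos_of_pos htpos _))]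
        _ ≤ (2 * t₀) ^ α' * (t ^ α')⁻¹ := by
              apply mul_le_mul_of_nonneg_right h1
              positivity
      exact le_trans (hfle t) h2'
    | succ n ih =>
      intro t ht h2t
      by_cases hcase : t ≤ t₀ * 2 ^ (n + 1)
      · exact ih t ht hcase
      push_neg at hcase
      have htpos : 0 < t := lt_of_lt_of_le ht₀0 ht
      have ht2 : t₀ ≤ t / 2 := by
        rw [le_div_iff₀ (by norm_num : (0:ℝ) < 2)]
        have : t₀ * 2 ≤ t₀ * 2 ^ (n + 1) := by
          apply mul_le_mul_of_nonneg_left _ (le_of_lt ht₀0)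
          exact le_self_pow₀ (by norm_num) (Nat.succ_ne_zero n)
        linarith
      have ht2' : t / 2 ≤ t₀ * 2 ^ (n + 1) := by
        rw [div_le_iff₀ (by norm_num : (0:ℝ) < 2)]
        calc t ≤ t₀ * 2 ^ (n + 1 + 1) := h2t
        _ = t₀ * 2 ^ (n + 1) * 2 := by ring
      have ihv := ih (t / 2) ht2 ht2'
      have hstepv := hstep (t / 2) ht2
      have h2t2 : 2 * (t / 2) = t := by ring
      rw [h2t2] at hstepv
      calc f t ≤ 2 ^ (-α') * f (t / 2) := hstepv
      _ ≤ 2 ^ (-α') * ((2 * t₀) ^ α' * (t / 2) ^ (-α')) := by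
            apply mul_le_mul_of_nonneg_left ihv (le_of_lt (Real.rpow_pos_of_pos two_pos _))
      _ = (2 * t₀) ^ α' * t ^ (-α') := by
            rw [Real.div_rpow (le_of_lt htpos) (by norm_num : (0:ℝ) ≤ 2)]
            have h2ne : ((2:ℝ) ^ (-α')) ≠ 0 := ne_of_gt (Real.rpow_pos_of_pos two_pos _)
            field_simp
  refine ⟨(2 * t₀) ^ α', Real.rpow_pos_of_pos (by linarith) _, ?_⟩
  intro t ht1
  by_cases hle : t ≤ t₀
  · -- f t ≤ 1 ≤ (2t₀)^α' t^{-α'} since t ≤ t₀ ≤ 2 t₀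
    have htpos : 0 < t := lt_of_lt_of_le one_pos ht1
    have h1 : t ^ α' ≤ (2 * t₀) ^ α' := by
      apply Real.rpow_le_rpow (le_of_lt htpos) (by linarith) (le_of_lt hα'0)
    have h2' : (1:ℝ) ≤ (2 * t₀) ^ α' * t ^ (-α') := by
      rw [Real.rpow_neg (le_of_lt htpos)]
      calc (1:ℝ) = t ^ α' * (t ^ α')⁻¹ := by
            rw [mul_inv_cancel₀ (ne_of_gt (Real.rpow_pos_of_pos htpos _))]
      _ ≤ (2 * t₀) ^ α' * (t ^ α')⁻¹ := by
            apply mul_le_mul_of_nonneg_right h1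
            positivity
    exact le_trans (hfle t) h2'
  · push_neg at hle
    obtain ⟨n, hn⟩ := pow_unbounded_of_one_lt (t / t₀) (by norm_num : (1:ℝ) < 2)
    have : t ≤ t₀ * 2 ^ (n + 1) := by
      rw [div_lt_iff₀ ht₀0] at hn
      calc t ≤ 2 ^ n * t₀ := le_of_lt hn
      _ ≤ t₀ * 2 ^ (n + 1) := by
          rw [mul_comm]
          apply mul_le_mul_of_nonneg_left _ (le_of_lt ht₀0)
          apply pow_le_pow_right₀ (by norm_num) (Nat.le_succ n)
    exact key n t (le_of_lt hle) this

lemma moment_lt_top {X : Ω → ℝ} (hX : Measurable X) (hXnn : ∀ ω, 0 ≤ X ω)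
    {α' C r : ℝ} (hC : 0 < C)
    (htail : ∀ t : ℝ, 1 ≤ t → (P {ω | t < X ω}).toReal ≤ C * t ^ (-α'))
    (hr0 : 0 < r) (hrα' : r < α') :
    ∫⁻ ω, ENNReal.ofReal (X ω ^ r) ∂P ≠ ⊤ := by
  have hα'0 : 0 < α' := lt_trans hr0 hrα'
  have h1 : ∫⁻ ω, ENNReal.ofReal (X ω ^ r) ∂P = ∫⁻ t in Ioi 0, P {a | t < X a ^ r} :=
    lintegral_eq_lintegral_meas_lt P (ae_of_all _ fun ω => Real.rpow_nonneg (hXnn ω) r)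
      ((hX.pow measurable_const).aemeasurable)
  have hsplit : (Ioi (0:ℝ)) = Ioc (0:ℝ) 1 ∪ Ioi 1 := (Set.Ioc_union_Ioi_eq_Ioi zero_le_one).symm
  have h2 : ∫⁻ t in Ioi (0:ℝ), P {a | t < X a ^ r}
      = (∫⁻ t in Ioc (0:ℝ) 1, P {a | t < X a ^ r}) + ∫⁻ t in Ioi (1:ℝ), P {a | t < X a ^ r} := by
    rw [hsplit, lintegral_union measurableSet_Ioi (Set.Ioc_disjoint_Ioi le_rfl)]
  have hb1 : (∫⁻ t in Ioc (0:ℝ) 1, P {a | t < X a ^ r}) ≤ 1 := by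
    calc (∫⁻ t in Ioc (0:ℝ) 1, P {a | t < X a ^ r}) ≤ ∫⁻ _ in Ioc (0:ℝ) 1, 1 :=
      lintegral_mono fun t => prob_le_one
    _ = 1 := by simp
  set e : ℝ := r⁻¹ * (-α') with he_def
  have he : e < -1 := by
    have h1' : 1 < α' / r := (one_lt_div hr0).mpr hrα'
    have : e = -(α' / r) := by
      rw [he_def, div_eq_inv_mul, mul_neg]
    rw [this]
    linarith
  have hb2 : (∫⁻ t in Ioi (1:ℝ), P {a | t < X a ^ r}) ≤
      ∫⁻ t in Ioi (1:ℝ), ENNReal.ofReal (C * t ^ e) := by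
    apply setLIntegral_mono' measurableSet_Ioi
    intro t ht
    have ht1 : (1:ℝ) < t := ht
    have ht0 : (0:ℝ) < t := lt_trans one_pos ht1
    have hsub : P {a | t < X a ^ r} ≤ P {a | t ^ r⁻¹ < X a} := by
      apply measure_mono
      intro a (ha : t < X a ^ r)
      show t ^ r⁻¹ < X a
      calc t ^ r⁻¹ < (X a ^ r) ^ r⁻¹ :=
        Real.rpow_lt_rpow (le_of_lt ht0) ha (by positivity)
      _ = X a := Real.rpow_rpow_inv (hXnn a) (ne_of_gt hr0)
    refine le_trans hsub ?_
    have ht1' : (1:ℝ) ≤ t ^ r⁻¹ := by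
      calc (1:ℝ) = 1 ^ r⁻¹ := (Real.one_rpow _).symm
      _ ≤ t ^ r⁻¹ := Real.rpow_le_rpow zero_le_one (le_of_lt ht1) (by positivity)
    have := htail (t ^ r⁻¹) ht1'
    rw [ENNReal.le_ofReal_iff_toReal_le (measure_ne_top _ _) (by positivity)]
    refine le_trans this ?_
    rw [← Real.rpow_mul (le_of_lt (lt_trans one_pos ht1))]
  have hb2' : (∫⁻ t in Ioi (1:ℝ), ENNReal.ofReal (C * t ^ e)) < ⊤ := by
    have hint : IntegrableOn (fun t : ℝ => C * t ^ e) (Ioi (1:ℝ)) := by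
      exact (integrableOn_Ioi_rpow_of_lt he one_pos).const_mul C
    exact hint.lintegral_lt_top
  rw [h1, h2]
  exact ne_of_lt (ENNReal.add_lt_top.mpr
    ⟨lt_of_le_of_lt hb1 ENNReal.one_lt_top, lt_of_le_of_lt hb2 hb2'⟩)

lemma cheby (W : ℕ → Ω → ℝ) (hWmeas : ∀ i, Measurable (W i))
    (hWindep : iIndepFun W P)
    (hWident : ∀ i, Measure.map (W i) P = Measure.map (W 0) P)
    (hWnonneg : ∀ i ω, 0 ≤ W i ω)
    {c : ℝ} (hc : 0 < c) (hc2 : 2 * c ≤ (P {ω | 1 < W 0 ω}).toReal)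
    (n : ℕ) (hn : 1 ≤ n) :
    P {ω | ∑ i ∈ Finset.range n, min (W i ω) 1 ≤ c * n} ≤ ENNReal.ofReal (1 / (c ^ 2 * n)) := by
  set V : ℕ → Ω → ℝ := fun i ω => min (W i ω) 1 with hV
  have hφ : Measurable fun x : ℝ => min x 1 := measurable_id.min measurable_const
  have hVmeas : ∀ i, Measurable (V i) := fun i => (hWmeas i).min measurable_const
  have hVbd : ∀ i ω, 0 ≤ V i ω ∧ V i ω ≤ 1 := fun i ω =>
    ⟨le_min (hWnonneg i ω) zero_le_one, min_le_right _ _⟩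
  have hVmem : ∀ i, MemLp (V i) 2 P := fun i =>
    MemLp.of_bound (hVmeas i).aestronglyMeasurable 1
      (ae_of_all _ fun ω => by
        rw [Real.norm_eq_abs, abs_le]
        constructor
        · linarith [(hVbd i ω).1]
        · exact (hVbd i ω).2)
  have hVindep : ∀ i j, i ≠ j → IndepFun (V i) (V j) P := fun i j hij =>
    (hWindep.indepFun hij).comp hφ hφ
  -- variance bound
  have hVvar : ∀ i, variance (V i) P ≤ 1 := by
    intro i
    refine le_trans (variance_le_expectation_sq (hVmeas i).aestronglyMeasurable) ?_
    calc ∫ ω, ((V i) ^ 2) ω ∂P ≤ ∫ _ω, (1:ℝ) ∂P := by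
          apply integral_mono ((hVmem i).integrable_sq) (integrable_const 1)
          intro ω
          have := (hVbd i ω)
          simp only [Pi.pow_apply]
          nlinarith [this.1, this.2]
    _ = 1 := by simp
  set SV : Ω → ℝ := ∑ i ∈ Finset.range n, V i with hSV
  have hSVmem : MemLp SV 2 P := memLp_finset_sum' _ fun i _ => hVmem i
  have hvar : variance SV P ≤ n := by
    rw [hSV, IndepFun.variance_sum (fun i _ => hVmem i)
      (fun i _ j _ hij => hVindep i j hij)]
    calc ∑ i ∈ Finset.range n, variance (V i) P ≤ ∑ _i ∈ Finset.range n, (1:ℝ) :=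
      Finset.sum_le_sum fun i _ => hVvar i
    _ = n := by simp
  -- mean bound
  have hEVi : ∀ i, ∫ ω, V i ω ∂P = ∫ ω, V 0 ω ∂P := by
    intro i
    have h1 : ∫ ω, V i ω ∂P = ∫ x, min x 1 ∂(Measure.map (W i) P) :=
      (integral_map (hWmeas i).aemeasurable hφ.aestronglyMeasurable).symm
    have h2 : ∫ ω, V 0 ω ∂P = ∫ x, min x 1 ∂(Measure.map (W 0) P) :=
      (integral_map (hWmeas 0).aemeasurable hφ.aestronglyMeasurable).symm
    rw [h1, h2, hWident i]
  have hEV0 : 2 * c ≤ ∫ ω, V 0 ω ∂P := by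
    set S : Set Ω := {ω | 1 < W 0 ω} with hS
    have hSmeas : MeasurableSet S := measurableSet_lt measurable_const (hWmeas 0)
    have hind : ∫ ω, S.indicator (fun _ => (1:ℝ)) ω ∂P = (P S).toReal := by
      rw [integral_indicator_const (1:ℝ) hSmeas]
      simp
      rfl
    have hmono : ∫ ω, S.indicator (fun _ => (1:ℝ)) ω ∂P ≤ ∫ ω, V 0 ω ∂P := by
      apply integral_mono ((integrable_const (1:ℝ)).indicator hSmeas)
        ((hVmem 0).integrable one_le_two)
      intro ω
      by_cases hω : ω ∈ S
      · rw [Set.indicator_of_mem hω]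
        exact le_min (le_of_lt hω) le_rfl
      · rw [Set.indicator_of_notMem hω]
        exact (hVbd 0 ω).1
    linarith [hc2, hind ▸ hmono]
  have hESV : 2 * c * n ≤ ∫ ω, SV ω ∂P := by
    have : ∫ ω, SV ω ∂P = ∑ i ∈ Finset.range n, ∫ ω, V i ω ∂P := by
      rw [hSV]
      rw [show (∫ ω, (∑ i ∈ Finset.range n, V i) ω ∂P) = ∫ ω, ∑ i ∈ Finset.range n, V i ω ∂P
        from integral_congr_ae (ae_of_all _ fun ω => by simp [Finset.sum_apply])]
      rw [integral_finset_sum _ fun i _ => (hVmem i).integrable one_le_two]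
    rw [this]
    have : ∑ i ∈ Finset.range n, ∫ ω, V i ω ∂P = n * ∫ ω, V 0 ω ∂P := by
      rw [Finset.sum_congr rfl fun i _ => hEVi i]
      simp [mul_comm]
    rw [this]
    calc 2 * c * n = n * (2 * c) := by ring
    _ ≤ n * ∫ ω, V 0 ω ∂P := by
        apply mul_le_mul_of_nonneg_left hEV0 (by positivity)
  -- Chebyshev
  have hcn : (0:ℝ) < c * n := by
    have : (1:ℝ) ≤ (n:ℝ) := by exact_mod_cast hn
    nlinarith
  have hcheb := meas_ge_le_variance_div_sq (μ := P) hSVmem hcn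
  have hincl : {ω | ∑ i ∈ Finset.range n, min (W i ω) 1 ≤ c * n}
      ⊆ {ω | c * n ≤ |SV ω - ∫ ω', SV ω' ∂P|} := by
    intro ω hω
    have hωs : SV ω ≤ c * n := by
      rw [hSV]
      simpa [Finset.sum_apply] using hω
    have : c * n ≤ (∫ ω', SV ω' ∂P) - SV ω := by linarith [hESV]
    calc c * n ≤ (∫ ω', SV ω' ∂P) - SV ω := this
    _ ≤ |SV ω - ∫ ω', SV ω' ∂P| := by
        rw [abs_sub_comm]
        exact le_abs_self _
  calc P {ω | ∑ i ∈ Finset.range n, min (W i ω) 1 ≤ c * n}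
      ≤ P {ω | c * n ≤ |SV ω - ∫ ω', SV ω' ∂P|} := measure_mono hincl
  _ ≤ ENNReal.ofReal (variance SV P / (c * n) ^ 2) := hcheb
  _ ≤ ENNReal.ofReal (1 / (c ^ 2 * n)) := by
      apply ENNReal.ofReal_le_ofReal
      rw [div_le_div_iff₀ (by positivity) (by positivity)]
      have hn1 : (1:ℝ) ≤ (n:ℝ) := by exact_mod_cast hn
      calc variance SV P * (c ^ 2 * n) ≤ n * (c ^ 2 * n) := by
            apply mul_le_mul_of_nonneg_right hvar (by positivity)
      _ = 1 * (c * n) ^ 2 := by ring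

lemma markov_bound (W : ℕ → Ω → ℝ) (hWmeas : ∀ i, Measurable (W i))
    (hWindep : iIndepFun W P)
    (hWident : ∀ i, Measure.map (W i) P = Measure.map (W 0) P)
    (hWnonneg : ∀ i ω, 0 ≤ W i ω)
    {β p : ℝ} (hβ0 : 0 < β) (hp1 : 1 < p) (n : ℕ) {x₀ : ℝ} (hx₀ : 0 ≤ x₀) (s : ℝ) :
    ENNReal.ofReal s *
      P {ω | s < W 0 ω ^ β * (x₀ + x₀ ^ (1 - p) * ∑ i ∈ Finset.Ico 1 n, W i ω ^ p)}
    ≤ ENNReal.ofReal x₀ * (∫⁻ ω, ENNReal.ofReal (W 0 ω ^ β) ∂P) +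
      ENNReal.ofReal (x₀ ^ (1 - p)) * ((n : ℝ≥0∞) *
        ((∫⁻ ω, ENNReal.ofReal (W 0 ω ^ β) ∂P) * ∫⁻ ω, ENNReal.ofReal (W 0 ω ^ p) ∂P)) := by
  set Mβ := ∫⁻ ω, ENNReal.ofReal (W 0 ω ^ β) ∂P with hMβ
  set Mp := ∫⁻ ω, ENNReal.ofReal (W 0 ω ^ p) ∂P with hMp
  set G : Ω → ℝ := fun ω => x₀ + x₀ ^ (1 - p) * ∑ i ∈ Finset.Ico 1 n, W i ω ^ p with hG
  have hGnn : ∀ ω, 0 ≤ G ω := by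
    intro ω
    have h1 : (0:ℝ) ≤ x₀ ^ (1 - p) := Real.rpow_nonneg hx₀ _
    have h2 : (0:ℝ) ≤ ∑ i ∈ Finset.Ico 1 n, W i ω ^ p :=
      Finset.sum_nonneg fun i _ => Real.rpow_nonneg (hWnonneg i ω) _
    positivity
  have hGmeas : Measurable G := by
    apply Measurable.add measurable_const
    apply Measurable.const_mul
    exact Finset.measurable_sum _ fun i _ => (hWmeas i).pow measurable_const
  set f : Ω → ℝ≥0∞ := fun ω => ENNReal.ofReal (W 0 ω ^ β) * ENNReal.ofReal (G ω) with hf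
  have hfmeas : Measurable f :=
    (((hWmeas 0).pow measurable_const).ennreal_ofReal).mul
      (hGmeas.ennreal_ofReal)
  have hsub : {ω | s < W 0 ω ^ β * G ω} ⊆ {ω | ENNReal.ofReal s ≤ f ω} := by
    intro ω (hω : s < W 0 ω ^ β * G ω)
    show ENNReal.ofReal s ≤ ENNReal.ofReal (W 0 ω ^ β) * ENNReal.ofReal (G ω)
    rw [← ENNReal.ofReal_mul (Real.rpow_nonneg (hWnonneg 0 ω) _)]
    exact ENNReal.ofReal_le_ofReal (le_of_lt hω)
  have hmarkov : ENNReal.ofReal s * P {ω | ENNReal.ofReal s ≤ f ω} ≤ ∫⁻ ω, f ω ∂P :=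
    mul_meas_ge_le_lintegral₀ hfmeas.aemeasurable _
  -- pointwise decomposition of f
  have hfeq : ∀ ω, f ω = ENNReal.ofReal (W 0 ω ^ β) * ENNReal.ofReal x₀ +
      ∑ i ∈ Finset.Ico 1 n, ENNReal.ofReal (x₀ ^ (1 - p)) *
        (ENNReal.ofReal (W 0 ω ^ β) * ENNReal.ofReal (W i ω ^ p)) := by
    intro ω
    rw [hf]
    have h2 : ∀ i ∈ Finset.Ico 1 n, (0:ℝ) ≤ W i ω ^ p :=
      fun i _ => Real.rpow_nonneg (hWnonneg i ω) _
    have hsumnn : (0:ℝ) ≤ ∑ i ∈ Finset.Ico 1 n, W i ω ^ p := Finset.sum_nonneg h2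
    rw [hG]
    simp only []
    rw [ENNReal.ofReal_add hx₀ (mul_nonneg (Real.rpow_nonneg hx₀ _) hsumnn),
      ENNReal.ofReal_mul (Real.rpow_nonneg hx₀ _), ENNReal.ofReal_sum_of_nonneg h2,
      mul_add]
    congr 1
    rw [Finset.mul_sum, Finset.mul_sum]
    apply Finset.sum_congr rfl
    intro i _
    ring
  have hlin : ∫⁻ ω, f ω ∂P = Mβ * ENNReal.ofReal x₀ +
      ∑ i ∈ Finset.Ico 1 n, ENNReal.ofReal (x₀ ^ (1 - p)) * (Mβ * Mp) := by
    rw [lintegral_congr hfeq]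
    have hmeas1 : Measurable fun ω => ENNReal.ofReal (W 0 ω ^ β) * ENNReal.ofReal x₀ :=
      (((hWmeas 0).pow measurable_const).ennreal_ofReal).mul measurable_const
    have hmeasi : ∀ i, Measurable fun ω => ENNReal.ofReal (x₀ ^ (1 - p)) *
        (ENNReal.ofReal (W 0 ω ^ β) * ENNReal.ofReal (W i ω ^ p)) := fun i =>
      ((((hWmeas 0).pow measurable_const).ennreal_ofReal).mul
        (((hWmeas i).pow measurable_const).ennreal_ofReal)).const_mul _
    rw [lintegral_add_left hmeas1, lintegral_finset_sum _ fun i _ => hmeasi i]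
    congr 1
    · exact lintegral_mul_const _ (ENNReal.measurable_ofReal.comp
        ((hWmeas 0).pow measurable_const))
    · apply Finset.sum_congr rfl
      intro i hi
      rw [lintegral_const_mul (μ := P) (ENNReal.ofReal (x₀ ^ (1 - p)))
        (f := fun a => ENNReal.ofReal (W 0 a ^ β) * ENNReal.ofReal (W i a ^ p))
        ((((hWmeas 0).pow measurable_const).ennreal_ofReal).mul
          (((hWmeas i).pow measurable_const).ennreal_ofReal))]
      congr 1
      have hi0 : (0:ℕ) ≠ i := by
        rcases Finset.mem_Ico.mp hi with ⟨h1, _⟩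
        omega
      have hind : IndepFun (W 0) (W i) P := hWindep.indepFun hi0
      have hφβ : Measurable fun x : ℝ => ENNReal.ofReal (x ^ β) :=
        (measurable_id.pow measurable_const).ennreal_ofReal
      have hφp : Measurable fun x : ℝ => ENNReal.ofReal (x ^ p) :=
        (measurable_id.pow measurable_const).ennreal_ofReal
      have hindc : IndepFun (fun ω => ENNReal.ofReal (W 0 ω ^ β))
          (fun ω => ENNReal.ofReal (W i ω ^ p)) P := hind.comp hφβ hφp
      rw [lintegral_mul_eq_lintegral_mul_lintegral_of_indepFun''
        (((hWmeas 0).pow measurable_const).ennreal_ofReal).aemeasurable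
        (((hWmeas i).pow measurable_const).ennreal_ofReal).aemeasurable hindc]
      congr 1
      -- identical distribution for the p-moment
      have h1 : ∫⁻ ω, ENNReal.ofReal (W i ω ^ p) ∂P
          = ∫⁻ x, ENNReal.ofReal (x ^ p) ∂(Measure.map (W i) P) :=
        (lintegral_map hφp (hWmeas i)).symm
      have h2 : Mp = ∫⁻ x, ENNReal.ofReal (x ^ p) ∂(Measure.map (W 0) P) :=
        (lintegral_map hφp (hWmeas 0)).symm
      rw [h1, h2, hWident i]
  calc ENNReal.ofReal s * P {ω | s < W 0 ω ^ β * G ω}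
      ≤ ENNReal.ofReal s * P {ω | ENNReal.ofReal s ≤ f ω} :=
        mul_le_mul_right (measure_mono hsub) _
  _ ≤ ∫⁻ ω, f ω ∂P := hmarkov
  _ = Mβ * ENNReal.ofReal x₀ + ∑ i ∈ Finset.Ico 1 n,
        ENNReal.ofReal (x₀ ^ (1 - p)) * (Mβ * Mp) := hlin
  _ ≤ ENNReal.ofReal x₀ * Mβ + ENNReal.ofReal (x₀ ^ (1 - p)) * ((n : ℝ≥0∞) * (Mβ * Mp)) := by
      rw [mul_comm Mβ (ENNReal.ofReal x₀)]
      apply add_le_add_right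
      rw [Finset.sum_const, Nat.card_Ico, nsmul_eq_mul, ← mul_assoc,
        mul_comm ((n - 1 : ℕ) : ℝ≥0∞) (ENNReal.ofReal (x₀ ^ (1 - p))), mul_assoc]
      exact mul_le_mul_right (mul_le_mul_left
        (by exact_mod_cast Nat.cast_le.mpr (Nat.sub_le n 1)) _) _

end Stmt5Aux

open Stmt5Aux

set_option maxHeartbeats 2000000 in
/-- Lemma `Wsmall`: For i.i.d. nonnegative `W₁, W₂, …` with continuous,
regularly varying distribution of index `α > 1`, and `kₙ → ∞`, `kₙ/n → 0`,
`n^{1/α}/kₙ = O(n^{−κ})` for some `κ ∈ (0, (α−1)/α)`: for every `ε > 0` and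
`β ∈ (0, α)`, `(n/kₙ)·P(W₁^β · W_{(1)}(n)/T(n) > ε) → 0` as `n → ∞`. -/
theorem stmt5 {Ω : Type} [MeasurableSpace Ω] (P : Measure Ω) [IsProbabilityMeasure P]
    (W : ℕ → Ω → ℝ)
    (hWmeas : ∀ i, Measurable (W i))
    (hWindep : iIndepFun W P)
    (hWident : ∀ i, Measure.map (W i) P = Measure.map (W 0) P)
    (hWnonneg : ∀ i ω, 0 ≤ W i ω)
    (hWcont : ∀ x : ℝ, P {ω | W 0 ω = x} = 0)
    (α : ℝ) (hα : 1 < α)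
    (hreg : RegVaryTail P (W 0) α)
    (k : ℕ → ℕ)
    (hk1 : Tendsto (fun n => (k n : ℝ)) atTop atTop)
    (hk2 : Tendsto (fun n => (k n : ℝ) / (n : ℝ)) atTop (nhds 0))
    (hk3 : ∃ κ : ℝ, 0 < κ ∧ κ < (α - 1) / α ∧
      (fun n : ℕ => (n : ℝ) ^ (1/α) / (k n : ℝ)) =O[atTop] fun n : ℕ => (n : ℝ) ^ (-κ))
    (ε β : ℝ) (hε : 0 < ε) (hβ0 : 0 < β) (hβα : β < α) :
    Tendsto (fun n : ℕ => ((n : ℝ) / (k n : ℝ)) *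
        (P {ω | ε < (W 0 ω) ^ β * (⨆ i : Fin n, W (i : ℕ) ω)
              / (∑ i ∈ Finset.range n, W i ω)}).toReal)
      atTop (nhds 0) := by
  obtain ⟨κ, hκ0, hκub, hO⟩ := hk3
  have hα0 : (0:ℝ) < α := lt_trans one_pos hα
  set θ : ℝ := (α - 1) / α - κ with hθdef
  have hθub : θ < (α - 1) / α := by
    rw [hθdef]; linarith
  have hfrac1 : (α - 1) / α < 1 := by
    rw [div_lt_one hα0]; linarith
  have hθpos : 0 < θ := sub_pos.mpr hκub
  have hθ1 : θ < 1 := lt_trans hθub hfrac1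
  -- choice of p
  set p : ℝ := (1/α + κ/2)⁻¹ with hpdef
  have hxp : 0 < 1/α + κ/2 := by positivity
  have hxp1 : 1/α + κ/2 < 1 := by
    have : κ < 1 - 1/α := by
      have : (α-1)/α = 1 - 1/α := by field_simp
      linarith [this ▸ hκub]
    linarith
  have hp1 : 1 < p := by
    rw [hpdef]
    exact (one_lt_inv_iff₀).mpr ⟨hxp, hxp1⟩
  have hp0 : 0 < p := lt_trans one_pos hp1
  have hpinv : 1/p = 1/α + κ/2 := by
    rw [hpdef, one_div, inv_inv]
  have hpα : p < α := by
    rw [hpdef]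
    calc (1/α + κ/2)⁻¹ < (1/α)⁻¹ := by
          apply inv_strictAnti₀ (by positivity)
          linarith
    _ = α := by rw [one_div, inv_inv]
  have hkey : θ + (1/p - 1) = -(κ/2) := by
    rw [hpinv, hθdef]
    field_simp
    ring
  -- choice of α'
  set m : ℝ := max (max p β) (θ * (1 + β)) with hmdef
  have hθβα : θ * (1 + β) < α := by
    have h1 : θ * (1 + β) < ((α-1)/α) * (1 + α) := by
      apply mul_lt_mul'' hθub (by linarith) (le_of_lt hθpos) (by linarith)
    have h2 : ((α-1)/α) * (1 + α) < α := by
      rw [div_mul_eq_mul_div, div_lt_iff₀ hα0]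
      nlinarith
    exact lt_trans h1 h2
  have hmα : m < α := by
    rw [hmdef]
    exact max_lt (max_lt hpα hβα) hθβα
  set α' : ℝ := (m + α) / 2 with hα'def
  have hα'α : α' < α := by rw [hα'def]; linarith
  have hmα' : m < α' := by rw [hα'def]; linarith
  have hpα' : p < α' := lt_of_le_of_lt (le_trans (le_max_left _ _) (le_max_left _ _)) hmα'
  have hβα' : β < α' := lt_of_le_of_lt (le_trans (le_max_right _ _) (le_max_left _ _)) hmα'
  have hθβα' : θ * (1 + β) < α' := lt_of_le_of_lt (le_max_right _ _) hmα'
  have hα'0 : 0 < α' := lt_trans hp0 hpα'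
  set η : ℝ := α' / (1 + β) with hηdef
  have hβ1 : (0:ℝ) < 1 + β := by linarith
  have hη0 : 0 < η := by rw [hηdef]; positivity
  have hθη : θ < η := by
    rw [hηdef, lt_div_iff₀ hβ1]
    exact hθβα'
  -- tail positivity and tail bound
  have hpos : ∀ t : ℝ, P {ω | t < W 0 ω} ≠ 0 := tail_pos P hreg
  obtain ⟨C, hC0, hC⟩ := tail_bound P hα'0 hα'α hreg hpos
  -- moments
  have hMβtop : ∫⁻ ω, ENNReal.ofReal (W 0 ω ^ β) ∂P ≠ ⊤ :=
    moment_lt_top P (hWmeas 0) (hWnonneg 0) hC0 hC hβ0 hβα'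
  have hMptop : ∫⁻ ω, ENNReal.ofReal (W 0 ω ^ p) ∂P ≠ ⊤ :=
    moment_lt_top P (hWmeas 0) (hWnonneg 0) hC0 hC hp0 hpα'
  set Mβ := ∫⁻ ω, ENNReal.ofReal (W 0 ω ^ β) ∂P with hMβdef
  set Mp := ∫⁻ ω, ENNReal.ofReal (W 0 ω ^ p) ∂P with hMpdef
  set mβ : ℝ := Mβ.toReal with hmβdef
  set mp : ℝ := Mp.toReal with hmpdef
  have hmβ0 : 0 ≤ mβ := ENNReal.toReal_nonneg
  have hmp0 : 0 ≤ mp := ENNReal.toReal_nonneg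
  -- constant c
  set c : ℝ := (P {ω | 1 < W 0 ω}).toReal / 2 with hcdef
  have hc : 0 < c := by
    rw [hcdef]
    exact half_pos (ENNReal.toReal_pos (hpos 1) (measure_ne_top _ _))
  have hc2 : 2 * c ≤ (P {ω | 1 < W 0 ω}).toReal := by rw [hcdef]; linarith
  -- big-O constant
  rw [isBigO_iff] at hO
  obtain ⟨C₁, hC₁⟩ := hO
  set C₀ : ℝ := max C₁ 1 with hC₀def
  have hC₀1 : (1:ℝ) ≤ C₀ := le_max_right _ _
  have hC₀0 : (0:ℝ) < C₀ := lt_of_lt_of_le one_pos hC₀1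
  -- the bound sequence
  set K₁ : ℝ := 1 / c^2 with hK₁def
  set K₂ : ℝ := C * (ε*c) ^ (-η) with hK₂def
  set K₃ : ℝ := mβ * (1 + mp) / (ε * c) with hK₃def
  set b : ℕ → ℝ := fun n => C₀ *
    (K₁ * (n:ℝ) ^ (θ - 1) + K₂ * (n:ℝ) ^ (θ - η) + K₃ * (n:ℝ) ^ (θ + (1/p - 1))) with hbdef
  have hb0 : Tendsto b atTop (nhds 0) := by
    have t1 : Tendsto (fun n : ℕ => ((n:ℝ)) ^ (θ - 1)) atTop (nhds 0) := by
      rw [show θ - 1 = -(1 - θ) by ring]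
      exact (tendsto_rpow_neg_atTop (by linarith)).comp tendsto_natCast_atTop_atTop
    have t2 : Tendsto (fun n : ℕ => ((n:ℝ)) ^ (θ - η)) atTop (nhds 0) := by
      rw [show θ - η = -(η - θ) by ring]
      exact (tendsto_rpow_neg_atTop (by linarith)).comp tendsto_natCast_atTop_atTop
    have t3 : Tendsto (fun n : ℕ => ((n:ℝ)) ^ (θ + (1/p - 1))) atTop (nhds 0) := by
      rw [hkey]
      exact (tendsto_rpow_neg_atTop (by linarith)).comp tendsto_natCast_atTop_atTop
    rw [hbdef, show (0:ℝ) = C₀ * (K₁ * 0 + K₂ * 0 + K₃ * 0) by ring]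
    exact (((t1.const_mul K₁).add (t2.const_mul K₂)).add (t3.const_mul K₃)).const_mul C₀
  -- eventual bound
  have hsev : Tendsto (fun n : ℕ => ε * c * (n:ℝ)) atTop atTop := by
    apply Tendsto.const_mul_atTop (by positivity)
    exact tendsto_natCast_atTop_atTop
  have hev : ∀ᶠ n : ℕ in atTop,
      ((n : ℝ) / (k n : ℝ)) *
        (P {ω | ε < (W 0 ω) ^ β * (⨆ i : Fin n, W (i : ℕ) ω)
              / (∑ i ∈ Finset.range n, W i ω)}).toReal ≤ b n := by
    filter_upwards [hC₁, eventually_ge_atTop 1, hsev.eventually_ge_atTop 1]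
      with n hOn hn1 hs1
    set nR : ℝ := (n : ℝ) with hnRdef
    have hnR1 : (1:ℝ) ≤ nR := by rw [hnRdef]; exact_mod_cast hn1
    have hnR0 : (0:ℝ) < nR := lt_of_lt_of_le one_pos hnR1
    set s : ℝ := ε * c * nR with hsdef
    have hs1' : (1:ℝ) ≤ s := hs1
    have hs0 : (0:ℝ) < s := lt_of_lt_of_le one_pos hs1'
    set x₀ : ℝ := nR ^ (1/p) with hx₀def
    have hx₀0 : (0:ℝ) < x₀ := Real.rpow_pos_of_pos hnR0 _
    set A0 : Set Ω := {ω | ∑ i ∈ Finset.range n, min (W i ω) 1 ≤ c * nR} with hA0def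
    set A1 : Set Ω := {ω | s ^ (1+β)⁻¹ < W 0 ω} with hA1def
    set A2 : Set Ω := {ω | s < W 0 ω ^ β *
      (x₀ + x₀ ^ (1 - p) * ∑ i ∈ Finset.Ico 1 n, W i ω ^ p)} with hA2def
    -- event inclusion
    have hsub : {ω | ε < (W 0 ω) ^ β * (⨆ i : Fin n, W (i : ℕ) ω)
        / (∑ i ∈ Finset.range n, W i ω)} ⊆ A0 ∪ (A1 ∪ A2) := by
      intro ω hω
      simp only [Set.mem_setOf_eq] at hω
      by_cases h0 : ω ∈ A0
      · exact Or.inl h0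
      right
      rw [hA0def, Set.mem_setOf_eq, not_le] at h0
      have hT : c * nR < ∑ i ∈ Finset.range n, W i ω := by
        refine lt_of_lt_of_le h0 (Finset.sum_le_sum fun i _ => min_le_left _ _)
      have hT0 : (0:ℝ) < ∑ i ∈ Finset.range n, W i ω := by
        have : (0:ℝ) < c * nR := by positivity
        linarith
      have hX : s < W 0 ω ^ β * (⨆ i : Fin n, W (i : ℕ) ω) := by
        have h1 : ε * (∑ i ∈ Finset.range n, W i ω)
            < W 0 ω ^ β * (⨆ i : Fin n, W (i : ℕ) ω) := (lt_div_iff₀ hT0).mp hω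
        have h2 : s < ε * (∑ i ∈ Finset.range n, W i ω) := by
          rw [hsdef]
          calc ε * c * nR = ε * (c * nR) := by ring
          _ < ε * (∑ i ∈ Finset.range n, W i ω) := by
              exact mul_lt_mul_of_pos_left hT hε
        linarith
      -- bound the max
      haveI : Nonempty (Fin n) := Fin.pos_iff_nonempty.mp (by omega)
      set G : ℝ := x₀ + x₀ ^ (1 - p) * ∑ i ∈ Finset.Ico 1 n, W i ω ^ p with hGdef
      have hptwise : ∀ w : ℝ, 0 ≤ w → w ≤ x₀ + x₀ ^ (1-p) * w ^ p := by
        intro w hw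
        by_cases hwx : w ≤ x₀
        · have : (0:ℝ) ≤ x₀ ^ (1-p) * w ^ p :=
            mul_nonneg (Real.rpow_nonneg (le_of_lt hx₀0) _) (Real.rpow_nonneg hw _)
          linarith
        · push_neg at hwx
          have hw0 : (0:ℝ) < w := lt_trans hx₀0 hwx
          have h1 : w ^ (1-p) ≤ x₀ ^ (1-p) :=
            Real.rpow_le_rpow_of_nonpos hx₀0 (le_of_lt hwx) (by linarith)
          have h2 : w = w ^ p * w ^ (1-p) := by
            rw [← Real.rpow_add hw0]
            norm_num
          have h3 : w ^ p * w ^ (1-p) ≤ w ^ p * x₀ ^ (1-p) :=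
            mul_le_mul_of_nonneg_left h1 (Real.rpow_nonneg (le_of_lt hw0) _)
          calc w = w ^ p * w ^ (1-p) := h2
          _ ≤ w ^ p * x₀ ^ (1-p) := h3
          _ = x₀ ^ (1-p) * w ^ p := by ring
          _ ≤ x₀ + x₀ ^ (1-p) * w ^ p := by linarith
      have hM : (⨆ i : Fin n, W (i : ℕ) ω) ≤ max (W 0 ω) G := by
        apply ciSup_le
        intro i
        rcases Nat.eq_zero_or_pos (i : ℕ) with hi | hi
        · rw [hi]
          exact le_max_left _ _
        · refine le_trans ?_ (le_max_right _ _)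
          have hmem : (i : ℕ) ∈ Finset.Ico 1 n := Finset.mem_Ico.mpr ⟨hi, i.isLt⟩
          have hsum : W (i : ℕ) ω ^ p ≤ ∑ j ∈ Finset.Ico 1 n, W j ω ^ p :=
            Finset.single_le_sum (fun j _ => Real.rpow_nonneg (hWnonneg j ω) p) hmem
          calc W (i : ℕ) ω ≤ x₀ + x₀ ^ (1-p) * W (i : ℕ) ω ^ p :=
            hptwise _ (hWnonneg _ ω)
          _ ≤ G := by
              rw [hGdef]
              have : x₀ ^ (1-p) * W (i : ℕ) ω ^ p ≤ x₀ ^ (1-p) * ∑ j ∈ Finset.Ico 1 n, W j ω ^ p :=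
                mul_le_mul_of_nonneg_left hsum (Real.rpow_nonneg (le_of_lt hx₀0) _)
              linarith
      have hX2 : s < W 0 ω ^ β * max (W 0 ω) G := by
        have := mul_le_mul_of_nonneg_left hM (Real.rpow_nonneg (hWnonneg 0 ω) β)
        linarith
      rw [mul_max_of_nonneg _ _ (Real.rpow_nonneg (hWnonneg 0 ω) β)] at hX2
      rcases lt_max_iff.mp hX2 with hcase | hcase
      · -- A1
        left
        rw [hA1def, Set.mem_setOf_eq]
        by_contra hA1
        push_neg at hA1
        have hWβ : W 0 ω ^ β ≤ (s ^ (1+β)⁻¹) ^ β :=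
          Real.rpow_le_rpow (hWnonneg 0 ω) hA1 (le_of_lt hβ0)
        have hprod : W 0 ω ^ β * W 0 ω ≤ (s ^ (1+β)⁻¹) ^ β * s ^ (1+β)⁻¹ := by
          apply mul_le_mul hWβ hA1 (hWnonneg 0 ω) (Real.rpow_nonneg (Real.rpow_nonneg
            (le_of_lt hs0) _) _)
        have heq : (s ^ (1+β)⁻¹) ^ β * s ^ (1+β)⁻¹ = s := by
          rw [← Real.rpow_mul (le_of_lt hs0), ← Real.rpow_add hs0]
          rw [show (1+β)⁻¹ * β + (1+β)⁻¹ = 1 by field_simp; ring]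
          exact Real.rpow_one s
        rw [heq] at hprod
        linarith
      · -- A2
        right
        rw [hA2def, Set.mem_setOf_eq]
        rw [hGdef] at hcase
        exact hcase
    -- probability bounds
    have hA0b : P A0 ≤ ENNReal.ofReal (K₁ * nR⁻¹) := by
      refine le_trans (cheby P W hWmeas hWindep hWident hWnonneg hc hc2 n hn1) ?_
      apply ENNReal.ofReal_le_ofReal
      rw [hK₁def]
      rw [le_iff_lt_or_eq]
      right
      field_simp
      rfl
    have hA1b : P A1 ≤ ENNReal.ofReal (K₂ * nR ^ (-η)) := by
      rw [ENNReal.le_ofReal_iff_toReal_le (measure_ne_top _ _)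
        (by positivity)]
      have ht1 : (1:ℝ) ≤ s ^ (1+β)⁻¹ := by
        calc (1:ℝ) = 1 ^ (1+β)⁻¹ := (Real.one_rpow _).symm
        _ ≤ s ^ (1+β)⁻¹ := Real.rpow_le_rpow zero_le_one hs1' (by positivity)
      refine le_trans (hC _ ht1) (le_of_eq ?_)
      have hexp : (s ^ (1+β)⁻¹) ^ (-α') = (ε*c) ^ (-η) * nR ^ (-η) := by
        rw [← Real.rpow_mul (le_of_lt hs0)]
        rw [show (1+β)⁻¹ * -α' = -η by rw [hηdef]; field_simp]
        rw [hsdef]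
        exact Real.mul_rpow (by positivity) (le_of_lt hnR0)
      rw [hexp, hK₂def]
      ring
    have hA2b : P A2 ≤ ENNReal.ofReal (K₃ * nR ^ (1/p - 1)) := by
      have hmb := markov_bound P W hWmeas hWindep hWident hWnonneg hβ0 hp1 n
        (le_of_lt hx₀0) s
      have hMβR : Mβ = ENNReal.ofReal mβ := (ENNReal.ofReal_toReal hMβtop).symm
      have hMpR : Mp = ENNReal.ofReal mp := (ENNReal.ofReal_toReal hMptop).symm
      have hcast : (n : ℝ≥0∞) = ENNReal.ofReal nR := by
        rw [hnRdef, ENNReal.ofReal_natCast]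
      set Num : ℝ := x₀ * mβ + x₀ ^ (1-p) * (nR * (mβ * mp)) with hNumdef
      have hNum0 : 0 ≤ Num := by
        rw [hNumdef]
        have := Real.rpow_nonneg (le_of_lt hx₀0) (1-p)
        positivity
      have hRHS : ENNReal.ofReal x₀ * Mβ + ENNReal.ofReal (x₀ ^ (1 - p)) * ((n : ℝ≥0∞) *
          (Mβ * Mp)) = ENNReal.ofReal Num := by
        rw [hMβR, hMpR, hcast, hNumdef]
        rw [← ENNReal.ofReal_mul (le_of_lt hx₀0),
          ← ENNReal.ofReal_mul hmβ0, ← ENNReal.ofReal_mul hnR0.le,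
          ← ENNReal.ofReal_mul (Real.rpow_nonneg (le_of_lt hx₀0) _),
          ← ENNReal.ofReal_add (mul_nonneg (le_of_lt hx₀0) hmβ0)
            (mul_nonneg (Real.rpow_nonneg (le_of_lt hx₀0) _)
              (mul_nonneg hnR0.le (mul_nonneg hmβ0 hmp0)))]
      rw [hRHS] at hmb
      have hstep : P A2 ≤ ENNReal.ofReal Num / ENNReal.ofReal s := by
        rw [ENNReal.le_div_iff_mul_le (Or.inl (by simp [hs0] : ENNReal.ofReal s ≠ 0))
          (Or.inl ENNReal.ofReal_ne_top)]
        rw [mul_comm]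
        exact hmb
      refine le_trans hstep ?_
      rw [← ENNReal.ofReal_div_of_pos hs0]
      apply ENNReal.ofReal_le_ofReal
      -- numeric identity
      have hx1p : x₀ ^ (1-p) = nR ^ (1/p - 1) := by
        rw [hx₀def, ← Real.rpow_mul (le_of_lt hnR0)]
        congr 1
        field_simp
      have hxn : nR ^ (1/p - 1) * nR = x₀ := by
        calc nR ^ (1/p - 1) * nR = nR ^ (1/p - 1) * nR ^ (1:ℝ) := by rw [Real.rpow_one]
        _ = nR ^ (1/p - 1 + 1) := (Real.rpow_add hnR0 _ _).symm
        _ = x₀ := by rw [hx₀def]; norm_num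
      have hNumeq : Num = x₀ * (mβ * (1 + mp)) := by
        rw [hNumdef, hx1p]
        calc x₀ * mβ + nR ^ (1/p-1) * (nR * (mβ * mp))
            = x₀ * mβ + (nR ^ (1/p-1) * nR) * (mβ * mp) := by ring
        _ = x₀ * mβ + x₀ * (mβ * mp) := by rw [hxn]
        _ = x₀ * (mβ * (1 + mp)) := by ring
      have hxdiv : x₀ / nR = nR ^ (1/p - 1) := by
        rw [Real.rpow_sub hnR0, Real.rpow_one, hx₀def]
      rw [hNumeq, hsdef, hK₃def]
      rw [le_iff_lt_or_eq]
      right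
      rw [← hxdiv]
      field_simp
    -- combine
    have hPE : (P {ω | ε < (W 0 ω) ^ β * (⨆ i : Fin n, W (i : ℕ) ω)
        / (∑ i ∈ Finset.range n, W i ω)}).toReal
        ≤ K₁ * nR⁻¹ + (K₂ * nR ^ (-η) + K₃ * nR ^ (1/p - 1)) := by
      apply ENNReal.toReal_le_of_le_ofReal
      · have h2 : 0 ≤ K₂ * nR ^ (-η) := by positivity
        have h3 : 0 ≤ K₃ * nR ^ (1/p - 1) := by positivity
        have h1 : 0 ≤ K₁ * nR⁻¹ := by positivity
        linarith
      calc P {ω | ε < (W 0 ω) ^ β * (⨆ i : Fin n, W (i : ℕ) ω)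
          / (∑ i ∈ Finset.range n, W i ω)} ≤ P (A0 ∪ (A1 ∪ A2)) := measure_mono hsub
      _ ≤ P A0 + P (A1 ∪ A2) := measure_union_le _ _
      _ ≤ P A0 + (P A1 + P A2) := add_le_add_right (measure_union_le _ _) _
      _ ≤ ENNReal.ofReal (K₁ * nR⁻¹) + (ENNReal.ofReal (K₂ * nR ^ (-η)) +
            ENNReal.ofReal (K₃ * nR ^ (1/p - 1))) :=
        add_le_add hA0b (add_le_add hA1b hA2b)
      _ = ENNReal.ofReal (K₁ * nR⁻¹ + (K₂ * nR ^ (-η) + K₃ * nR ^ (1/p - 1))) := by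
          rw [← ENNReal.ofReal_add (by positivity) (by positivity),
            ← ENNReal.ofReal_add (by positivity) (by positivity)]
    -- bound n / k n
    have hkn : nR / (k n : ℝ) ≤ C₀ * nR ^ θ := by
      have h1 : nR ^ (1/α) / (k n : ℝ) ≤ C₀ * nR ^ (-κ) := by
        have hnrm := hOn
        rw [Real.norm_eq_abs, Real.norm_eq_abs] at hnrm
        have h2 : nR ^ (1/α) / (k n : ℝ) ≤ |nR ^ (1/α) / (k n : ℝ)| := le_abs_self _
        have h3 : |nR ^ (-κ)| = nR ^ (-κ) := abs_of_nonneg (Real.rpow_nonneg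
          (le_of_lt hnR0) _)
        rw [h3] at hnrm
        have h4 : C₁ * nR ^ (-κ) ≤ C₀ * nR ^ (-κ) :=
          mul_le_mul_of_nonneg_right (le_max_left _ _) (Real.rpow_nonneg (le_of_lt hnR0) _)
        exact le_trans (le_trans h2 hnrm) h4
      have hsplit : nR / (k n : ℝ) = nR ^ ((α-1)/α) * (nR ^ (1/α) / (k n : ℝ)) := by
        have hprod : nR ^ ((α-1)/α) * nR ^ (1/α) = nR := by
          rw [← Real.rpow_add hnR0]
          rw [show (α-1)/α + 1/α = 1 by field_simp; ring]
          exact Real.rpow_one nR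
        rw [← mul_div_assoc, hprod]
      rw [hsplit]
      calc nR ^ ((α-1)/α) * (nR ^ (1/α) / (k n : ℝ))
          ≤ nR ^ ((α-1)/α) * (C₀ * nR ^ (-κ)) :=
        mul_le_mul_of_nonneg_left h1 (Real.rpow_nonneg (le_of_lt hnR0) _)
      _ = C₀ * nR ^ θ := by
          rw [show nR ^ ((α-1)/α) * (C₀ * nR ^ (-κ)) = C₀ * (nR ^ ((α-1)/α) * nR ^ (-κ))
            by ring, ← Real.rpow_add hnR0]
          rw [show (α-1)/α + -κ = θ by rw [hθdef]; ring]
    -- final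
    calc nR / (k n : ℝ) *
        (P {ω | ε < (W 0 ω) ^ β * (⨆ i : Fin n, W (i : ℕ) ω)
              / (∑ i ∈ Finset.range n, W i ω)}).toReal
        ≤ (C₀ * nR ^ θ) * (K₁ * nR⁻¹ + (K₂ * nR ^ (-η) + K₃ * nR ^ (1/p - 1))) := by
          apply mul_le_mul hkn hPE ENNReal.toReal_nonneg (by positivity)
    _ = b n := by
        rw [hbdef]
        have r1 : nR ^ θ * nR⁻¹ = nR ^ (θ-1) := by
          rw [← Real.rpow_neg_one nR, ← Real.rpow_add hnR0]
          congr 1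
        have r2 : nR ^ θ * nR ^ (-η) = nR ^ (θ-η) := by
          rw [← Real.rpow_add hnR0]
          ring_nf
        have r3 : nR ^ θ * nR ^ (1/p-1) = nR ^ (θ+(1/p-1)) := (Real.rpow_add hnR0 _ _).symm
        simp only []
        linear_combination C₀ * K₁ * r1 + C₀ * K₂ * r2 + C₀ * K₃ * r3
  apply squeeze_zero' (Eventually.of_forall fun n => ?_) hev hb0
  · positivity
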